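/- Fix n ∈ ℕ and ε ∈ [0, 1/2]. Every extreme point P of the set of probability distributions on {0,1}^n satisfying the Santha–Vazirani condition with parameter ε is a permutation of the Bernoulli distribution with parameter p₊ = 1/2 + ε; that is, there exists a permutation σ of {0,1}^n such that P(x) = B(σ(x)) for all x ∈ {0,1}^n, where B(x) = (1/2+ε)^{n−w(x)} (1/2−ε)^{w(x)} and w(x) denotes the Hamming weight of x. -/

import Mathlib

open Finset

/-- Hamming weight of a binary string. -/
def hammingWeight {n : ℕ} (x : Fin n → Bool) : ℕ :=
  (Finset.univ.filter (fun j => x j = true)).card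

/-- The Bernoulli distribution with parameter `p₊ = 1/2 + ε` on `{0,1}^n`:
`B(x) = (1/2+ε)^(n−w(x)) (1/2−ε)^(w(x))`. -/
noncomputable def bern (n : ℕ) (ε : ℝ) (x : Fin n → Bool) : ℝ :=
  (1/2 + ε) ^ (n - hammingWeight x) * (1/2 - ε) ^ (hammingWeight x)

/-- Marginal probability of a prefix `y` of length `i` under `P`. -/
noncomputable def prefMarg {n : ℕ} (P : (Fin n → Bool) → ℝ) {i : ℕ} (h : i ≤ n)
    (y : Fin i → Bool) : ℝ :=
  ∑ x ∈ Finset.univ.filter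
      (fun x : Fin n → Bool => ∀ j : Fin i, x (Fin.castLE h j) = y j), P x

/-- `P` is a probability distribution on `{0,1}^n` satisfying the Santha–Vazirani
condition with parameter `ε`: every conditional probability of the next bit given
a prefix of positive probability lies in `[1/2−ε, 1/2+ε]`. -/
noncomputable def IsSV (n : ℕ) (ε : ℝ) (P : (Fin n → Bool) → ℝ) : Prop :=
  (∀ x, 0 ≤ P x) ∧ (∑ x, P x = 1) ∧
  ∀ (i : ℕ) (hi : i < n) (y : Fin i → Bool),
    0 < prefMarg P hi.le y → ∀ b : Bool,
      1/2 - ε ≤ prefMarg P hi (Fin.snoc y b) / prefMarg P hi.le y ∧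
      prefMarg P hi (Fin.snoc y b) / prefMarg P hi.le y ≤ 1/2 + ε

/-- The set of SV distributions with parameter `ε` on `{0,1}^n`. -/
noncomputable def SVset (n : ℕ) (ε : ℝ) : Set ((Fin n → Bool) → ℝ) :=
  {P | IsSV n ε P}

/-- The `K`-th Ky Fan norm of `Q` : the sum of the `K` largest values of `Q`
(with multiplicity), i.e. the maximal sum of `Q` over subsets of cardinality `K`. -/
noncomputable def kyFan {Z : Type*} [Fintype Z] (K : ℕ) (Q : Z → ℝ) : ℝ :=
  sSup ((fun S : Finset Z => ∑ z ∈ S, Q z) '' {S : Finset Z | S.card = K})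

-- helpers
lemma tail_snoc' {i : ℕ} (y : Fin (i+1) → Bool) (b : Bool) :
    Fin.tail (Fin.snoc (α := fun _ => Bool) y b) = Fin.snoc (α := fun _ => Bool) (Fin.tail y) b := by
  conv_lhs => rw [← Fin.cons_self_tail y]
  rw [← Fin.cons_snoc_eq_snoc_cons (y 0) (Fin.tail y) b, Fin.tail_cons]

lemma castLE_zero' {i n : ℕ} (h : i+1 ≤ n+1) : Fin.castLE h (0 : Fin (i+1)) = 0 := rfl

lemma castLE_succ' {i n : ℕ} (h : i+1 ≤ n+1) (j : Fin i) :
    Fin.castLE h (Fin.succ j) = Fin.succ (Fin.castLE (Nat.succ_le_succ_iff.mp h) j) := rfl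

lemma sum_cons_reindex {n : ℕ} (g : (Fin (n+1) → Bool) → ℝ) :
    ∑ x, g x = ∑ b, ∑ x' : Fin n → Bool, g (Fin.cons b x') := by
  rw [← Equiv.sum_comp (Fin.consEquiv (fun _ => Bool)) g, Fintype.sum_prod_type]
  rfl

lemma prefMarg_zero {n : ℕ} (P : (Fin n → Bool) → ℝ) (y : Fin 0 → Bool) :
    prefMarg P (Nat.zero_le n) y = ∑ x, P x := by
  unfold prefMarg
  rw [Finset.filter_true_of_mem]
  intro x _ j; exact j.elim0

lemma prefMarg_succ {n i : ℕ} (P : (Fin (n+1) → Bool) → ℝ) (h : i+1 ≤ n+1) (y : Fin (i+1) → Bool) :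
    prefMarg P h y
      = prefMarg (fun x' => P (Fin.cons (y 0) x')) (Nat.succ_le_succ_iff.mp h) (Fin.tail y) := by
  unfold prefMarg
  rw [Finset.sum_filter, Finset.sum_filter, sum_cons_reindex]
  have key : ∀ b (x' : Fin n → Bool),
      (∀ j : Fin (i+1), (Fin.cons b x' : Fin (n+1) → Bool) (Fin.castLE h j) = y j) ↔
      (b = y 0 ∧ ∀ j : Fin i, x' (Fin.castLE (Nat.succ_le_succ_iff.mp h) j) = Fin.tail y j) := by
    intro b x'
    constructor
    · intro hc
      have h0 := hc 0
      rw [castLE_zero', Fin.cons_zero] at h0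
      refine ⟨h0, fun j => ?_⟩
      have := hc (Fin.succ j)
      rwa [castLE_succ', Fin.cons_succ] at this
    · rintro ⟨hb, hc⟩ j
      refine Fin.cases ?_ (fun k => ?_) j
      · rw [castLE_zero', Fin.cons_zero]; exact hb
      · rw [castLE_succ', Fin.cons_succ]; exact hc k
  calc ∑ b, ∑ x' : Fin n → Bool,
        (if (∀ j : Fin (i+1), (Fin.cons b x' : Fin (n+1) → Bool) (Fin.castLE h j) = y j) then P (Fin.cons b x') else 0)
      = ∑ b, if b = y 0 then
          (∑ x' : Fin n → Bool, if (∀ j : Fin i, x' (Fin.castLE (Nat.succ_le_succ_iff.mp h) j) = Fin.tail y j)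
            then P (Fin.cons b x') else 0) else 0 := by
        refine Finset.sum_congr rfl fun b _ => ?_
        by_cases hb : b = y 0
        · simp only [hb, if_pos rfl]
          refine Finset.sum_congr rfl fun x' _ => ?_
          rw [if_congr ((key (y 0) x').trans (and_iff_right rfl)) rfl rfl]
        · simp only [if_neg hb]
          refine Finset.sum_eq_zero fun x' _ => ?_
          rw [if_neg]
          intro hc
          exact hb ((key b x').mp hc).1
      _ = _ := by rw [Finset.sum_ite_eq' Finset.univ (y 0), if_pos (Finset.mem_univ (y 0))]

lemma hammingWeight_cons {n : ℕ} (b : Bool) (x : Fin n → Bool) :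
    hammingWeight (Fin.cons b x) = (if b then 1 else 0) + hammingWeight x := by
  unfold hammingWeight
  rw [Finset.card_filter, Finset.card_filter, Fin.sum_univ_succ]
  simp [Fin.cons_succ]

lemma hammingWeight_le {n : ℕ} (x : Fin n → Bool) : hammingWeight x ≤ n := by
  classical
  simpa [hammingWeight] using Finset.card_filter_le Finset.univ (fun j => x j = true)

lemma bern_cons {n : ℕ} (ε : ℝ) (b : Bool) (x : Fin n → Bool) :
    bern (n+1) ε (Fin.cons b x) = (if b then (1/2 - ε) else (1/2 + ε)) * bern n ε x := by
  unfold bern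
  rw [hammingWeight_cons]
  cases b
  · have e1 : (if (false : Bool) then 1 else 0) = 0 := rfl
    have e2 : (if (false : Bool) then (1/2 - ε) else (1/2 + ε)) = 1/2 + ε := rfl
    rw [e1, e2, Nat.zero_add]
    have : n + 1 - hammingWeight x = (n - hammingWeight x) + 1 :=
      Nat.succ_sub (hammingWeight_le x)
    rw [this, pow_succ]
    ring
  · have e1 : (if (true : Bool) then 1 else 0) = 1 := rfl
    have e2 : (if (true : Bool) then (1/2 - ε) else (1/2 + ε)) = 1/2 - ε := rfl
    rw [e1, e2]
    have : n + 1 - (1 + hammingWeight x) = n - hammingWeight x := by omega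
    rw [this, Nat.add_comm 1 (hammingWeight x), pow_succ]
    ring

-- ## Part 2

lemma snoc_zero_of_pos {i : ℕ} (y : Fin (i+1) → Bool) (b : Bool) :
    (Fin.snoc (α := fun _ => Bool) y b) 0 = y 0 := by
  have : (0 : Fin (i+2)) = Fin.castSucc 0 := rfl
  rw [this, Fin.snoc_castSucc]

lemma snoc_nil_zero (y : Fin 0 → Bool) (b : Bool) :
    (Fin.snoc (α := fun _ => Bool) y b) 0 = b := by
  have : (0 : Fin 1) = Fin.last 0 := rfl
  rw [this, Fin.snoc_last]

lemma prefMarg_nonneg {n i : ℕ} {P : (Fin n → Bool) → ℝ} (hP : ∀ x, 0 ≤ P x)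
    (h : i ≤ n) (y : Fin i → Bool) : 0 ≤ prefMarg P h y :=
  Finset.sum_nonneg fun x _ => hP x

lemma prefMarg_smul {n i : ℕ} (c : ℝ) (P : (Fin n → Bool) → ℝ) (h : i ≤ n) (y : Fin i → Bool) :
    prefMarg (fun x => c * P x) h y = c * prefMarg P h y := by
  unfold prefMarg; rw [Finset.mul_sum]

lemma prefMarg_div {n i : ℕ} (c : ℝ) (P : (Fin n → Bool) → ℝ) (h : i ≤ n) (y : Fin i → Bool) :
    prefMarg (fun x => P x / c) h y = prefMarg P h y / c := by
  unfold prefMarg; rw [Finset.sum_div]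

/-- The composition lemma: gluing two SV distributions with a first-bit
distribution within the SV bounds gives an SV distribution. -/
lemma comp_mem {n : ℕ} {ε : ℝ} (hε : ε ≤ 1/2)
    (p : Bool → ℝ) (Q : Bool → (Fin n → Bool) → ℝ)
    (hp : ∀ b, 1/2 - ε ≤ p b ∧ p b ≤ 1/2 + ε) (hsum : p false + p true = 1)
    (hQ : ∀ b, IsSV n ε (Q b)) :
    IsSV (n+1) ε (fun x => p (x 0) * Q (x 0) (Fin.tail x)) := by
  have hp0 : ∀ b, 0 ≤ p b := fun b => le_trans (by linarith) (hp b).1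
  have key : ∀ (k : ℕ) (h : k+1 ≤ n+1) (z : Fin (k+1) → Bool),
      prefMarg (fun x => p (x 0) * Q (x 0) (Fin.tail x)) h z
        = p (z 0) * prefMarg (Q (z 0)) (Nat.succ_le_succ_iff.mp h) (Fin.tail z) := by
    intro k h z
    rw [prefMarg_succ]
    have : (fun x' => (fun x : Fin (n+1) → Bool => p (x 0) * Q (x 0) (Fin.tail x)) (Fin.cons (z 0) x'))
        = fun x' => p (z 0) * Q (z 0) x' := by
      funext x'; simp [Fin.cons_zero, Fin.tail_cons]
    rw [this, prefMarg_smul]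
  refine ⟨fun x => mul_nonneg (hp0 _) ((hQ (x 0)).1 (Fin.tail x)), ?_, ?_⟩
  · rw [sum_cons_reindex]
    have : ∀ b, ∑ x' : Fin n → Bool,
        (fun x : Fin (n+1) → Bool => p (x 0) * Q (x 0) (Fin.tail x)) (Fin.cons b x') = p b := by
      intro b
      have : ∀ x' : Fin n → Bool,
          (fun x : Fin (n+1) → Bool => p (x 0) * Q (x 0) (Fin.tail x)) (Fin.cons b x') = p b * Q b x' := by
        intro x'; simp [Fin.cons_zero, Fin.tail_cons]
      rw [Finset.sum_congr rfl (fun x' _ => this x'), ← Finset.mul_sum, (hQ b).2.1, mul_one]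
    rw [Fintype.sum_bool, this, this, add_comm]
    exact hsum
  · intro i hi y hpos b
    match i, hi, y with
    | 0, hi, y =>
      have h1 : prefMarg (fun x => p (x 0) * Q (x 0) (Fin.tail x)) hi (Fin.snoc y b)
          = p b := by
        rw [key 0 hi (Fin.snoc y b), snoc_nil_zero]
        have := prefMarg_zero (Q b) (Fin.tail (Fin.snoc (α := fun _ => Bool) y b))
        rw [show (Nat.succ_le_succ_iff.mp hi : (0:ℕ) ≤ n) = Nat.zero_le n from rfl] at *
        rw [this, (hQ b).2.1, mul_one]
      have h0 : prefMarg (fun x => p (x 0) * Q (x 0) (Fin.tail x)) hi.le y = 1 := by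
        rw [show (hi.le : (0:ℕ) ≤ n+1) = Nat.zero_le (n+1) from rfl]
        rw [prefMarg_zero]
        rw [sum_cons_reindex]
        have : ∀ b', ∑ x' : Fin n → Bool,
            (fun x : Fin (n+1) → Bool => p (x 0) * Q (x 0) (Fin.tail x)) (Fin.cons b' x') = p b' := by
          intro b'
          have : ∀ x' : Fin n → Bool,
              (fun x : Fin (n+1) → Bool => p (x 0) * Q (x 0) (Fin.tail x)) (Fin.cons b' x') = p b' * Q b' x' := by
            intro x'; simp [Fin.cons_zero, Fin.tail_cons]
          rw [Finset.sum_congr rfl (fun x' _ => this x'), ← Finset.mul_sum, (hQ b').2.1, mul_one]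
        rw [Fintype.sum_bool, this, this, add_comm]
        exact hsum
      rw [h0, h1, div_one]
      exact hp b
    | (j+1), hi, y =>
      have hj : j < n := Nat.succ_lt_succ_iff.mp hi
      have hA := key j hi.le y
      have hB := key (j+1) hi (Fin.snoc y b)
      rw [snoc_zero_of_pos, tail_snoc'] at hB
      rw [hA] at hpos ⊢
      rw [hB]
      set A := prefMarg (Q (y 0)) (Nat.succ_le_succ_iff.mp hi.le) (Fin.tail y) with hAdef
      have hApos : 0 < A ∧ 0 < p (y 0) := by
        constructor
        · rcases lt_or_eq_of_le (prefMarg_nonneg (hQ (y 0)).1 (Nat.succ_le_succ_iff.mp hi.le) (Fin.tail y)) with h | h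
          · exact h
          · rw [hAdef, ← h, mul_zero] at hpos; exact absurd hpos (lt_irrefl 0)
        · rcases lt_or_eq_of_le (hp0 (y 0)) with h | h
          · exact h
          · rw [← h, zero_mul] at hpos; exact absurd hpos (lt_irrefl 0)
      have hcond := (hQ (y 0)).2.2 j hj (Fin.tail y) (by
        have : prefMarg (Q (y 0)) hj.le (Fin.tail y) = A := rfl
        rw [this]; exact hApos.1) b
      have hratio : p (y 0) * prefMarg (Q (y 0)) (Nat.succ_le_succ_iff.mp hi) (Fin.snoc (Fin.tail y) b)
          / (p (y 0) * A)
          = prefMarg (Q (y 0)) hj (Fin.snoc (Fin.tail y) b) / A := by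
        rw [mul_div_mul_left _ _ (ne_of_gt hApos.2)]
      rw [hratio]
      exact hcond

-- ## Part 3 : bern is SV

lemma bern_zero_eq (ε : ℝ) (x : Fin 0 → Bool) : bern 0 ε x = 1 := by
  have : hammingWeight x = 0 := by
    simp [hammingWeight]
  simp [bern, this]

lemma bern_succ_eq (n : ℕ) (ε : ℝ) :
    bern (n+1) ε = fun x => (if x 0 then (1/2 - ε) else (1/2 + ε)) * bern n ε (Fin.tail x) := by
  funext x
  conv_lhs => rw [← Fin.cons_self_tail x]
  rw [bern_cons]

lemma bern_isSV (n : ℕ) {ε : ℝ} (hε0 : 0 ≤ ε) (hε : ε ≤ 1/2) : IsSV n ε (bern n ε) := by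
  induction n with
  | zero =>
    refine ⟨fun x => by rw [bern_zero_eq]; norm_num, ?_, ?_⟩
    · rw [Fintype.sum_unique, bern_zero_eq]
    · intro i hi; exact absurd hi (Nat.not_lt_zero i)
  | succ n ih =>
    rw [bern_succ_eq]
    exact comp_mem hε (fun b => if b then (1/2 - ε) else (1/2 + ε)) (fun _ => bern n ε)
      (by intro b; cases b <;> constructor <;> simp <;> linarith)
      (by norm_num) (fun _ => ih)

lemma bern_nonneg (n : ℕ) {ε : ℝ} (hε0 : 0 ≤ ε) (hε : ε ≤ 1/2) (x : Fin n → Bool) :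
    0 ≤ bern n ε x := (bern_isSV n hε0 hε).1 x

-- ## Part 4 : decomposition of an SV distribution

section Decomp

variable {n : ℕ} {ε : ℝ} (P : (Fin (n+1) → Bool) → ℝ)

/-- First-bit marginal. -/
noncomputable def firstP (b : Bool) : ℝ := ∑ x' : Fin n → Bool, P (Fin.cons b x')

/-- Conditional distribution given first bit `b` (with Bernoulli fallback). -/
noncomputable def condP (ε : ℝ) (b : Bool) : (Fin n → Bool) → ℝ :=
  if 0 < firstP P b then (fun x' => P (Fin.cons b x') / firstP P b) else bern n ε

variable {P}

lemma firstP_nonneg (hP : ∀ x, 0 ≤ P x) (b : Bool) : 0 ≤ firstP P b :=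
  Finset.sum_nonneg fun x _ => hP _

lemma firstP_sum (hP : ∑ x, P x = 1) : firstP P false + firstP P true = 1 := by
  rw [← hP, sum_cons_reindex P, Fintype.sum_bool, add_comm]; rfl

lemma branch_eq_zero (hP : ∀ x, 0 ≤ P x) {b : Bool} (hb : firstP P b = 0)
    (x' : Fin n → Bool) : P (Fin.cons b x') = 0 := by
  have := (Finset.sum_eq_zero_iff_of_nonneg (fun x _ => hP (Fin.cons b x))).mp hb
  exact this x' (Finset.mem_univ x')

/-- Reconstruction of `P` from its first-bit marginal and conditionals. -/
lemma reconstruct (hP : ∀ x, 0 ≤ P x) (b : Bool) (x' : Fin n → Bool) :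
    P (Fin.cons b x') = firstP P b * condP P ε b x' := by
  unfold condP
  by_cases h : 0 < firstP P b
  · rw [if_pos h, mul_div_cancel₀ _ (ne_of_gt h)]
  · rw [if_neg h]
    have h0 : firstP P b = 0 := le_antisymm (not_lt.mp h) (firstP_nonneg hP b)
    rw [h0, zero_mul, branch_eq_zero hP h0]

/-- The marginal of a prefix `cons b y` equals the corresponding branch marginal. -/
lemma prefMarg_cons_eq {i : ℕ} (h : i+1 ≤ n+1) (b : Bool) (y : Fin i → Bool) :
    prefMarg P h (Fin.cons b y)
      = prefMarg (fun x' => P (Fin.cons b x')) (Nat.succ_le_succ_iff.mp h) y := by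
  rw [prefMarg_succ P h (Fin.cons b y), Fin.cons_zero, Fin.tail_cons]

lemma firstP_bounds (hP : IsSV (n+1) ε P) (b : Bool) :
    1/2 - ε ≤ firstP P b ∧ firstP P b ≤ 1/2 + ε := by
  have h0 : (0:ℕ) < n + 1 := Nat.succ_pos n
  have hy : prefMarg P h0.le (Fin.elim0 : Fin 0 → Bool) = 1 := by
    rw [show (h0.le : (0:ℕ) ≤ n+1) = Nat.zero_le (n+1) from rfl, prefMarg_zero]
    exact hP.2.1
  have hc := hP.2.2 0 h0 Fin.elim0 (by rw [hy]; norm_num) b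
  rw [hy, div_one] at hc
  have hv : prefMarg P h0 (Fin.snoc Fin.elim0 b) = firstP P b := by
    have hz : (Fin.snoc (α := fun _ => Bool) (Fin.elim0 : Fin 0 → Bool) b) = Fin.cons b Fin.elim0 := by
      funext j
      have hj : j = 0 := Fin.fin_one_eq_zero j
      rw [hj, snoc_nil_zero, Fin.cons_zero]
    rw [hz, prefMarg_cons_eq h0, prefMarg_zero]
    rfl
  rw [hv] at hc
  exact hc

lemma condP_isSV (hP : IsSV (n+1) ε P) {b : Bool} (hb : 0 < firstP P b) :
    IsSV n ε (condP P ε b) := by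
  have hcb : condP P ε b = fun x' => P (Fin.cons b x') / firstP P b := by
    unfold condP; rw [if_pos hb]
  rw [hcb]
  refine ⟨fun x' => div_nonneg (hP.1 _) hb.le, ?_, ?_⟩
  · rw [← Finset.sum_div, div_eq_one_iff_eq (ne_of_gt hb)]; rfl
  · intro i hi y hpos c
    have hin : i + 1 < n + 1 := Nat.succ_lt_succ hi
    have hmargs : ∀ (k : ℕ) (hk : k ≤ n) (z : Fin k → Bool),
        prefMarg (fun x' => P (Fin.cons b x') / firstP P b) hk z
          = prefMarg P (Nat.succ_le_succ hk) (Fin.cons b z) / firstP P b := by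
      intro k hk z
      rw [prefMarg_div, prefMarg_cons_eq (Nat.succ_le_succ hk) b z]
    have hy := hmargs i hi.le y
    have hyc := hmargs (i+1) hi (Fin.snoc y c)
    rw [hy] at hpos ⊢
    rw [hyc]
    have hPpos : 0 < prefMarg P (Nat.succ_le_succ hi.le) (Fin.cons b y) := by
      have h2 := mul_pos hpos hb
      rwa [div_mul_cancel₀ _ (ne_of_gt hb)] at h2
    have hsnoc : (Fin.cons b (Fin.snoc y c) : Fin (i+2) → Bool)
        = Fin.snoc (Fin.cons b y) c := Fin.cons_snoc_eq_snoc_cons b y c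
    rw [hsnoc]
    have hcond := hP.2.2 (i+1) hin (Fin.cons b y) hPpos c
    have hre : ∀ (X Y : ℝ), Y ≠ 0 → X / firstP P b / (Y / firstP P b) = X / Y := by
      intro X Y hY
      rw [div_div_div_comm, div_self (ne_of_gt hb), div_one]
    rw [hre _ _ (ne_of_gt hPpos)]
    exact hcond

end Decomp

-- ## Part 5 : extreme point analysis

section Extreme

variable {n : ℕ} {ε : ℝ}

lemma condP_isSV_always {P : (Fin (n+1) → Bool) → ℝ} (hε0 : 0 ≤ ε) (hε : ε ≤ 1/2)
    (hP : IsSV (n+1) ε P) (b : Bool) : IsSV n ε (condP P ε b) := by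
  by_cases hb : 0 < firstP P b
  · exact condP_isSV hP hb
  · unfold condP; rw [if_neg hb]; exact bern_isSV n hε0 hε

lemma condP_sum_one {P : (Fin (n+1) → Bool) → ℝ} (hε0 : 0 ≤ ε) (hε : ε ≤ 1/2)
    (hP : IsSV (n+1) ε P) (b : Bool) : ∑ x', condP P ε b x' = 1 :=
  (condP_isSV_always hε0 hε hP b).2.1

lemma firstP_endpoint {P : (Fin (n+1) → Bool) → ℝ} (hε0 : 0 ≤ ε) (hε : ε ≤ 1/2)
    (hP : P ∈ Set.extremePoints ℝ (SVset (n+1) ε)) :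
    firstP P false = 1/2 - ε ∨ firstP P false = 1/2 + ε := by
  obtain ⟨hPmem, hext⟩ := mem_extremePoints.mp hP
  have hPSV : IsSV (n+1) ε P := hPmem
  have hb := firstP_bounds hPSV
  by_contra hcon
  push_neg at hcon
  obtain ⟨hne1, hne2⟩ := hcon
  have hlt1 : 1/2 - ε < firstP P false := lt_of_le_of_ne (hb false).1 (Ne.symm hne1)
  have hlt2 : firstP P false < 1/2 + ε := lt_of_le_of_ne (hb false).2 hne2
  set δ := min (1/2 + ε - firstP P false) (firstP P false - (1/2 - ε)) with hδdef
  have hδpos : 0 < δ := lt_min (by linarith) (by linarith)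
  have hδ1 : δ ≤ 1/2 + ε - firstP P false := min_le_left _ _
  have hδ2 : δ ≤ firstP P false - (1/2 - ε) := min_le_right _ _
  have hps := firstP_sum hPSV.2.1
  -- the two perturbed distributions
  set pθ : ℝ → Bool → ℝ := fun t b => if b then firstP P true - t else firstP P false + t with hpθ
  have hbound : ∀ (t : ℝ), |t| ≤ δ → ∀ b, 1/2 - ε ≤ pθ t b ∧ pθ t b ≤ 1/2 + ε := by
    intro t ht b
    have h1 := abs_le.mp ht
    cases b <;> simp only [hpθ, if_true, if_false] <;> constructor <;> simp <;> linarith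
  have hsum' : ∀ t : ℝ, pθ t false + pθ t true = 1 := by
    intro t; simp only [hpθ, if_true, if_false]; simp; linarith
  set Q := condP P ε with hQdef
  have hQsv : ∀ b, IsSV n ε (Q b) := condP_isSV_always hε0 hε hPSV
  set Pp := fun x : Fin (n+1) → Bool => pθ δ (x 0) * Q (x 0) (Fin.tail x) with hPp
  set Pm := fun x : Fin (n+1) → Bool => pθ (-δ) (x 0) * Q (x 0) (Fin.tail x) with hPm
  have hPpSV : Pp ∈ SVset (n+1) ε :=
    comp_mem hε (pθ δ) Q (hbound δ (by rw [abs_of_pos hδpos]) ) (hsum' δ) hQsv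
  have hPmSV : Pm ∈ SVset (n+1) ε :=
    comp_mem hε (pθ (-δ)) Q (hbound (-δ) (by rw [abs_neg, abs_of_pos hδpos]) ) (hsum' (-δ)) hQsv
  have hrec : ∀ x, P x = firstP P (x 0) * Q (x 0) (Fin.tail x) := by
    intro x
    conv_lhs => rw [← Fin.cons_self_tail x]
    exact reconstruct hPSV.1 (x 0) (Fin.tail x)
  have hmid : P ∈ openSegment ℝ Pp Pm := by
    refine ⟨1/2, 1/2, by norm_num, by norm_num, by norm_num, ?_⟩
    funext x
    have estep : (((1:ℝ)/2) • Pp + ((1:ℝ)/2) • Pm) x = ((1:ℝ)/2) * Pp x + ((1:ℝ)/2) * Pm x := rfl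
    have e1 : Pp x = pθ δ (x 0) * Q (x 0) (Fin.tail x) := rfl
    have e2 : Pm x = pθ (-δ) (x 0) * Q (x 0) (Fin.tail x) := rfl
    rw [estep, e1, e2, hrec x]
    cases h0 : x 0
    · have f1 : pθ δ false = firstP P false + δ := rfl
      have f2 : pθ (-δ) false = firstP P false + -δ := rfl
      rw [f1, f2]; ring
    · have f1 : pθ δ true = firstP P true - δ := rfl
      have f2 : pθ (-δ) true = firstP P true - -δ := rfl
      rw [f1, f2]; ring
  have heq := (hext Pp hPpSV Pm hPmSV hmid).1
  -- derive contradiction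
  obtain ⟨x₀, -, hx₀⟩ : ∃ x₀ ∈ Finset.univ, Q false x₀ ≠ 0 := by
    apply Finset.exists_ne_zero_of_sum_ne_zero
    rw [(hQsv false).2.1]; norm_num
  have h1 := congrFun heq (Fin.cons false x₀)
  rw [hrec (Fin.cons false x₀)] at h1
  simp only [hPp, Fin.cons_zero, Fin.tail_cons] at h1
  have f1 : pθ δ false = firstP P false + δ := rfl
  rw [f1] at h1
  have : δ * Q false x₀ = 0 := by linear_combination h1
  rcases mul_eq_zero.mp this with h | h
  · exact absurd h (ne_of_gt hδpos)
  · exact hx₀ h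

lemma condP_extreme {P : (Fin (n+1) → Bool) → ℝ} (hε0 : 0 ≤ ε) (hε : ε ≤ 1/2)
    (hP : P ∈ Set.extremePoints ℝ (SVset (n+1) ε)) {b : Bool} (hb : 0 < firstP P b) :
    condP P ε b ∈ Set.extremePoints ℝ (SVset n ε) := by
  obtain ⟨hPmem, hext⟩ := mem_extremePoints.mp hP
  have hPSV : IsSV (n+1) ε P := hPmem
  refine mem_extremePoints.mpr ⟨condP_isSV hPSV hb, ?_⟩
  intro R₁ hR₁ R₂ hR₂ hseg
  obtain ⟨a, c, ha, hc, hac, heq⟩ := hseg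
  set S : ((Fin n → Bool) → ℝ) → Bool → ((Fin n → Bool) → ℝ) :=
    fun R b' => if b' = b then R else condP P ε b' with hS
  have hSsv : ∀ R, R ∈ SVset n ε → ∀ b', IsSV n ε (S R b') := by
    intro R hR b'
    by_cases hbb : b' = b
    · rw [hS]; simp only [if_pos hbb]; exact hR
    · rw [hS]; simp only [if_neg hbb]; exact condP_isSV_always hε0 hε hPSV b'
  set P₁ := fun x : Fin (n+1) → Bool => firstP P (x 0) * S R₁ (x 0) (Fin.tail x) with hP₁
  set P₂ := fun x : Fin (n+1) → Bool => firstP P (x 0) * S R₂ (x 0) (Fin.tail x) with hP₂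
  have hP₁SV : P₁ ∈ SVset (n+1) ε :=
    comp_mem hε _ _ (firstP_bounds hPSV) (firstP_sum hPSV.2.1) (hSsv R₁ hR₁)
  have hP₂SV : P₂ ∈ SVset (n+1) ε :=
    comp_mem hε _ _ (firstP_bounds hPSV) (firstP_sum hPSV.2.1) (hSsv R₂ hR₂)
  have hrec : ∀ x, P x = firstP P (x 0) * condP P ε (x 0) (Fin.tail x) := by
    intro x
    conv_lhs => rw [← Fin.cons_self_tail x]
    exact reconstruct hPSV.1 (x 0) (Fin.tail x)
  have hmid : P ∈ openSegment ℝ P₁ P₂ := by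
    refine ⟨a, c, ha, hc, hac, ?_⟩
    funext x
    rw [show (a • P₁ + c • P₂) x = a * P₁ x + c * P₂ x from rfl, hrec x, hP₁, hP₂]
    by_cases hbb : x 0 = b
    · simp only [hS, if_pos hbb]
      have := congrFun heq (Fin.tail x)
      rw [show (a • R₁ + c • R₂) (Fin.tail x) = a * R₁ (Fin.tail x) + c * R₂ (Fin.tail x) from rfl] at this
      rw [hbb, ← this]
      ring
    · simp only [hS, if_neg hbb]
      linear_combination (firstP P (x 0) * condP P ε (x 0) (Fin.tail x)) * hac
  obtain ⟨he₁, he₂⟩ := hext P₁ hP₁SV P₂ hP₂SV hmid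
  constructor
  · funext x'
    have h1 := congrFun he₁ (Fin.cons b x')
    rw [hrec (Fin.cons b x')] at h1
    simp only [hP₁, Fin.cons_zero, Fin.tail_cons, hS, if_pos rfl] at h1
    exact mul_left_cancel₀ (ne_of_gt hb) h1
  · funext x'
    have h1 := congrFun he₂ (Fin.cons b x')
    rw [hrec (Fin.cons b x')] at h1
    simp only [hP₂, Fin.cons_zero, Fin.tail_cons, hS, if_pos rfl] at h1
    exact mul_left_cancel₀ (ne_of_gt hb) h1

end Extreme

-- ## Part 6 : main induction

lemma main_aux (ε : ℝ) (hε0 : 0 ≤ ε) (hε : ε ≤ 1/2) :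
    ∀ (n : ℕ) (P : (Fin n → Bool) → ℝ), P ∈ Set.extremePoints ℝ (SVset n ε) →
      ∃ σ : Equiv.Perm (Fin n → Bool), ∀ x, P x = bern n ε (σ x) := by
  intro n
  induction n with
  | zero =>
    intro P hP
    refine ⟨Equiv.refl _, fun x => ?_⟩
    have hPSV : IsSV 0 ε P := hP.1
    have hsum := hPSV.2.1
    haveI : Subsingleton (Fin 0 → Bool) := ⟨fun a b => funext fun j => j.elim0⟩
    rw [Fintype.sum_subsingleton _ x] at hsum
    rw [Equiv.refl_apply, bern_zero_eq, hsum]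
  | succ n ih =>
    intro P hP
    have hPSV : IsSV (n+1) ε P := hP.1
    have hT : ∀ b : Bool, ∃ τ : Equiv.Perm (Fin n → Bool),
        ∀ x', P (Fin.cons b x') = firstP P b * bern n ε (τ x') := by
      intro b
      by_cases hb : 0 < firstP P b
      · obtain ⟨τ, hτ⟩ := ih (condP P ε b) (condP_extreme hε0 hε hP hb)
        exact ⟨τ, fun x' => by rw [reconstruct hPSV.1 b x', hτ x']⟩
      · have h0 : firstP P b = 0 := le_antisymm (not_lt.mp hb) (firstP_nonneg hPSV.1 b)
        exact ⟨Equiv.refl _, fun x' => by rw [branch_eq_zero hPSV.1 h0, h0, zero_mul]⟩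
    choose T hTspec using hT
    have hep := firstP_endpoint hε0 hε hP
    have hps := firstP_sum hPSV.2.1
    obtain ⟨f, hf, hq⟩ : ∃ f : Bool → Bool, (∀ b, f (f b) = b) ∧
        (∀ b, firstP P b = if f b then 1/2 - ε else 1/2 + ε) := by
      rcases hep with h | h
      · refine ⟨not, fun b => Bool.not_not b, fun b => ?_⟩
        cases b
        · simpa using h
        · simp; linarith
      · refine ⟨id, fun b => rfl, fun b => ?_⟩
        cases b
        · simpa using h
        · simp; linarith
    refine ⟨⟨fun x => Fin.cons (f (x 0)) (T (x 0) (Fin.tail x)),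
            fun x => Fin.cons (f (x 0)) ((T (f (x 0))).symm (Fin.tail x)), ?_, ?_⟩, ?_⟩
    · intro x
      simp only [Fin.cons_zero, Fin.tail_cons, hf, Equiv.symm_apply_apply, Fin.cons_self_tail]
    · intro x
      simp only [Fin.cons_zero, Fin.tail_cons, hf, Equiv.apply_symm_apply, Fin.cons_self_tail]
    · intro x
      show P x = bern (n+1) ε (Fin.cons (f (x 0)) (T (x 0) (Fin.tail x)))
      rw [bern_cons, ← hq (x 0)]
      conv_lhs => rw [← Fin.cons_self_tail x]
      exact hTspec (x 0) (Fin.tail x)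


/-- Proposition 1: every extreme point of the set of SV distributions
with parameter ε is a permutation of the Bernoulli distribution with parameter
p₊ = 1/2 + ε. -/
theorem sv_extreme_points_are_permuted_bernoulli
    (n : ℕ) (ε : ℝ) (hε0 : 0 ≤ ε) (hε : ε ≤ 1/2)
    (P : (Fin n → Bool) → ℝ) (hP : P ∈ Set.extremePoints ℝ (SVset n ε)) :
    ∃ σ : Equiv.Perm (Fin n → Bool), ∀ x, P x = bern n ε (σ x) := by
  exact main_aux ε hε0 hε n P hP
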